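/- For the type D_∞ quiver structure: suppose dim P(λ^(0)) = p₀, dim P(λ^(1)) = p₁, and dim P(λ^(i)) for i ≥ 2 satisfies K₁ i^{2m-1} ≤ p_i ≤ K₂ i^{2m-1}. Define D_d = Σ dim of summands of P_d as in the resolution (summands indexed by d+1, d-1, ..., ending in 2, or in 0 or 1). Then there exist K₁', K₂' > 0 with K₁' d^{2m} ≤ D_d ≤ K₂' d^{2m} for all d ≥ 1; consequently the rate of growth of {D_d} is 2m+1. -/

import Mathlib

/-- The labels of the indecomposable summands of the `d`-th term of the minimal projective
resolution of the trivial module (type `D_∞` block): for `d` odd they are `d+1, d-1, ..., 2`;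
for `d ≡ 0 (mod 4)` they are `d+1, ..., 3, 0`; for `d ≡ 2 (mod 4)` they are `d+1, ..., 3, 1`. -/
def resSummands (d : ℕ) : Finset ℕ :=
  if d % 2 = 1 then (Finset.range (d + 2)).filter (fun i => 2 ≤ i ∧ i % 2 = 0)
  else ((Finset.range (d + 2)).filter (fun i => 3 ≤ i ∧ i % 2 = 1)) ∪ {d % 4 / 2}

lemma mem_res (d j : ℕ) (hd : 1 ≤ d) (hj : j ≤ d / 4) :
    d + 1 - 2 * j ∈ resSummands d := by
  unfold resSummands
  rcases Nat.even_or_odd d with he | ho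
  · have h2 : d % 2 = 0 := Nat.even_iff.mp he
    rw [if_neg (by omega)]
    refine Finset.mem_union_left _ ?_
    simp only [Finset.mem_filter, Finset.mem_range]
    omega
  · have h2 : d % 2 = 1 := Nat.odd_iff.mp ho
    rw [if_pos h2]
    simp only [Finset.mem_filter, Finset.mem_range]
    omega

lemma res_subset (d : ℕ) : resSummands d ⊆ Finset.range (d + 2) := by
  intro i hi
  unfold resSummands at hi
  split at hi
  · simp only [Finset.mem_filter, Finset.mem_range] at hi
    simp only [Finset.mem_range]
    omega
  · simp only [Finset.mem_union, Finset.mem_filter, Finset.mem_range,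
      Finset.mem_singleton] at hi
    simp only [Finset.mem_range]
    omega

/-- If `dim P(λ^(i)) = p_i` satisfies `K₁ i^(2m-1) ≤ p_i ≤ K₂ i^(2m-1)` for `i ≥ 2`, and
`D_d = Σ` of the `p_i` over the summands of the `d`-th term of the resolution, then
`K₁' d^(2m) ≤ D_d ≤ K₂' d^(2m)` for positive constants `K₁', K₂'`, and consequently the rate
of growth of `{D_d}` is `2m+1`. -/
theorem stmt14 (m : ℕ) (hm : 1 ≤ m) (p : ℕ → ℕ) (K₁ K₂ : ℝ) (h₁ : 0 < K₁) (h₂ : 0 < K₂)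
    (h : ∀ i : ℕ, 2 ≤ i →
      K₁ * (i : ℝ) ^ (2 * m - 1) ≤ (p i : ℝ) ∧ (p i : ℝ) ≤ K₂ * (i : ℝ) ^ (2 * m - 1)) :
    (∃ K₁' K₂' : ℝ, 0 < K₁' ∧ 0 < K₂' ∧ ∀ d : ℕ, 1 ≤ d →
      K₁' * (d : ℝ) ^ (2 * m) ≤ ((∑ i ∈ resSummands d, p i : ℕ) : ℝ) ∧
      ((∑ i ∈ resSummands d, p i : ℕ) : ℝ) ≤ K₂' * (d : ℝ) ^ (2 * m)) ∧
    IsLeast {c : ℕ | ∃ C : ℝ, 0 < C ∧ ∀ d : ℕ, 1 ≤ d →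
      ((∑ i ∈ resSummands d, p i : ℕ) : ℝ) ≤ C * (d : ℝ) ^ ((c : ℤ) - 1)} (2 * m + 1) := by
  set n := 2 * m - 1 with hn
  have hnm : 2 * m = n + 1 := by omega
  set P : ℝ := (p 0 : ℝ) + (p 1 : ℝ) + 1 with hP
  have hPpos : 0 < P := by positivity
  set A : ℝ := K₁ / 4 ^ (2 * m) with hA
  set B : ℝ := 3 * P + 3 * 2 ^ n * K₂ with hB
  have hApos : 0 < A := by positivity
  have hBpos : 0 < B := by positivity
  have lower : ∀ d : ℕ, 1 ≤ d →
      A * (d : ℝ) ^ (2 * m) ≤ ((∑ i ∈ resSummands d, p i : ℕ) : ℝ) := by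
    intro d hd
    have hd1 : (1 : ℝ) ≤ (d : ℝ) := by exact_mod_cast hd
    set t := d / 4 with ht
    set S := (Finset.range (t + 1)).image (fun j => d + 1 - 2 * j) with hS
    have hsub : S ⊆ resSummands d := by
      intro i hi
      simp only [hS, Finset.mem_image, Finset.mem_range] at hi
      obtain ⟨j, hj, rfl⟩ := hi
      exact mem_res d j hd (by omega)
    have hcard : S.card = t + 1 := by
      rw [hS, Finset.card_image_of_injOn, Finset.card_range]
      intro a ha b hb hab
      simp only [Finset.coe_range, Set.mem_Iio] at ha hb
      simp only [] at hab
      omega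
    have hstep : ∀ i ∈ S, K₁ * ((d : ℝ) / 4) ^ n ≤ (p i : ℝ) := by
      intro i hi
      simp only [hS, Finset.mem_image, Finset.mem_range] at hi
      obtain ⟨j, hj, rfl⟩ := hi
      have h2 : 2 ≤ d + 1 - 2 * j := by omega
      have h4 : (d : ℝ) / 4 ≤ ((d + 1 - 2 * j : ℕ) : ℝ) := by
        have hle : d ≤ 4 * (d + 1 - 2 * j) := by omega
        have := (Nat.cast_le (α := ℝ)).mpr hle
        push_cast at this
        linarith
      calc K₁ * ((d : ℝ) / 4) ^ n ≤ K₁ * ((d + 1 - 2 * j : ℕ) : ℝ) ^ n := by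
            gcongr
        _ ≤ (p (d + 1 - 2 * j) : ℝ) := (h _ h2).1
    have hsum1 : (S.card : ℝ) * (K₁ * ((d : ℝ) / 4) ^ n) ≤ ∑ i ∈ S, (p i : ℝ) := by
      have := Finset.card_nsmul_le_sum S (fun i => (p i : ℝ)) (K₁ * ((d : ℝ) / 4) ^ n) hstep
      simpa [nsmul_eq_mul] using this
    have hsum2 : ∑ i ∈ S, (p i : ℝ) ≤ ∑ i ∈ resSummands d, (p i : ℝ) :=
      Finset.sum_le_sum_of_subset_of_nonneg hsub (fun i _ _ => by positivity)
    have hdt : (d : ℝ) / 4 ≤ (t : ℝ) + 1 := by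
      have hle : d ≤ 4 * (t + 1) := by omega
      have := (Nat.cast_le (α := ℝ)).mpr hle
      push_cast at this
      linarith
    calc A * (d : ℝ) ^ (2 * m)
        = K₁ * ((d : ℝ) / 4) ^ n * ((d : ℝ) / 4) := by
          rw [hA, hnm]
          field_simp
          have h4 : ((1:ℝ)/4)^n * 4^n = 1 := by rw [← mul_pow]; norm_num
          linear_combination (-((d:ℝ) * (d:ℝ)^n * 4)) * h4
      _ ≤ K₁ * ((d : ℝ) / 4) ^ n * ((t : ℝ) + 1) := by
          have : (0:ℝ) ≤ K₁ * ((d : ℝ) / 4) ^ n := by positivity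
          exact mul_le_mul_of_nonneg_left hdt this
      _ = (S.card : ℝ) * (K₁ * ((d : ℝ) / 4) ^ n) := by rw [hcard]; push_cast; ring
      _ ≤ ∑ i ∈ S, (p i : ℝ) := hsum1
      _ ≤ ∑ i ∈ resSummands d, (p i : ℝ) := hsum2
      _ = ((∑ i ∈ resSummands d, p i : ℕ) : ℝ) := by rw [Nat.cast_sum]
  have upper : ∀ d : ℕ, 1 ≤ d →
      ((∑ i ∈ resSummands d, p i : ℕ) : ℝ) ≤ B * (d : ℝ) ^ (2 * m) := by
    intro d hd
    have hd1 : (1 : ℝ) ≤ (d : ℝ) := by exact_mod_cast hd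
    have hbd : ∀ i ∈ resSummands d, (p i : ℝ) ≤ P + K₂ * ((d : ℝ) + 1) ^ n := by
      intro i hi
      have hi2 : i < d + 2 := by
        have := res_subset d hi
        simpa [Finset.mem_range] using this
      rcases le_or_gt 2 i with h2 | h2
      · have hle : (p i : ℝ) ≤ K₂ * (i : ℝ) ^ n := (h i h2).2
        have : K₂ * (i : ℝ) ^ n ≤ K₂ * ((d : ℝ) + 1) ^ n := by
          gcongr
          · exact_mod_cast Nat.lt_succ_iff.mp hi2
        linarith
      · interval_cases i
        · have : (0:ℝ) ≤ K₂ * ((d : ℝ) + 1) ^ n := by positivity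
          simp only [hP]
          have h1 : (0:ℝ) ≤ (p 1 : ℝ) := by positivity
          linarith
        · have : (0:ℝ) ≤ K₂ * ((d : ℝ) + 1) ^ n := by positivity
          simp only [hP]
          have h0 : (0:ℝ) ≤ (p 0 : ℝ) := by positivity
          linarith
    have hcard : (resSummands d).card ≤ d + 2 := by
      calc (resSummands d).card ≤ (Finset.range (d + 2)).card :=
            Finset.card_le_card (res_subset d)
        _ = d + 2 := Finset.card_range _
    have hsum : ((∑ i ∈ resSummands d, p i : ℕ) : ℝ)
        ≤ ((resSummands d).card : ℝ) * (P + K₂ * ((d : ℝ) + 1) ^ n) := by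
      rw [Nat.cast_sum]
      have := Finset.sum_le_card_nsmul (resSummands d) (fun i => (p i : ℝ))
        (P + K₂ * ((d : ℝ) + 1) ^ n) hbd
      rw [nsmul_eq_mul] at this
      exact this
    have hPB : (0:ℝ) ≤ P + K₂ * ((d : ℝ) + 1) ^ n := by positivity
    calc ((∑ i ∈ resSummands d, p i : ℕ) : ℝ)
        ≤ ((resSummands d).card : ℝ) * (P + K₂ * ((d : ℝ) + 1) ^ n) := hsum
      _ ≤ ((d : ℝ) + 2) * (P + K₂ * ((d : ℝ) + 1) ^ n) := by
          apply mul_le_mul_of_nonneg_right _ hPB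
          exact_mod_cast hcard
      _ ≤ (3 * (d : ℝ)) * (P + K₂ * (2 * (d : ℝ)) ^ n) := by
          apply mul_le_mul (by linarith) _ hPB (by linarith)
          gcongr
          · linarith
      _ = 3 * P * (d : ℝ) + 3 * 2 ^ n * K₂ * ((d : ℝ) ^ n * (d : ℝ)) := by
          rw [mul_pow]; ring
      _ ≤ 3 * P * (d : ℝ) ^ (2 * m) + 3 * 2 ^ n * K₂ * (d : ℝ) ^ (2 * m) := by
          rw [hnm, ← pow_succ]
          have hds : (d : ℝ) ≤ (d : ℝ) ^ (n + 1) :=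
            le_self_pow₀ (by linarith) (by omega)
          have := mul_le_mul_of_nonneg_left hds (show (0:ℝ) ≤ 3 * P by positivity)
          linarith
      _ = B * (d : ℝ) ^ (2 * m) := by rw [hB]; ring
  refine ⟨⟨A, B, hApos, hBpos, fun d hd => ⟨lower d hd, upper d hd⟩⟩, ?_, ?_⟩
  · -- membership: c = 2m+1 works with C = B
    refine ⟨B, hBpos, fun d hd => ?_⟩
    have hcast : ((2 * m + 1 : ℕ) : ℤ) - 1 = ((2 * m : ℕ) : ℤ) := by push_cast; ring
    rw [hcast, zpow_natCast]
    exact upper d hd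
  · -- lower bound of IsLeast
    rintro c ⟨C, hC, hCd⟩
    by_contra hlt
    push_neg at hlt
    have hc : c ≤ 2 * m := by omega
    have key : ∀ d : ℕ, 1 ≤ d → A * (d : ℝ) ≤ C := by
      intro d hd
      have hd1 : (1 : ℝ) ≤ (d : ℝ) := by exact_mod_cast hd
      have hz1 : (d : ℝ) ^ ((c : ℤ) - 1) ≤ (d : ℝ) ^ ((n : ℕ) : ℤ) := by
        apply zpow_le_zpow_right₀ hd1
        have : (c : ℤ) ≤ 2 * (m : ℤ) := by exact_mod_cast hc
        omega
      have hz2 : (d : ℝ) ^ ((n : ℕ) : ℤ) = (d : ℝ) ^ n := zpow_natCast _ _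
      have hchain : A * (d : ℝ) ^ (2 * m) ≤ C * (d : ℝ) ^ n := by
        calc A * (d : ℝ) ^ (2 * m) ≤ ((∑ i ∈ resSummands d, p i : ℕ) : ℝ) := lower d hd
          _ ≤ C * (d : ℝ) ^ ((c : ℤ) - 1) := hCd d hd
          _ ≤ C * (d : ℝ) ^ n := by
              rw [← hz2]
              exact mul_le_mul_of_nonneg_left hz1 hC.le
      have hpow : (0:ℝ) < (d : ℝ) ^ n := by positivity
      rw [hnm, pow_succ] at hchain
      have := (mul_le_mul_iff_of_pos_right hpow).mp (by linarith [hchain] : A * (d : ℝ) * (d : ℝ) ^ n ≤ C * (d : ℝ) ^ n)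
      exact this
    obtain ⟨d, hdgt⟩ := exists_nat_gt (max (C / A) 1)
    have hd1 : 1 ≤ d := by
      by_contra hd0
      push_neg at hd0
      interval_cases d
      · simp at hdgt
        linarith [hdgt.2]
    have h1 : C / A < (d : ℝ) := lt_of_le_of_lt (le_max_left _ _) hdgt
    have h2 : C < A * (d : ℝ) := by
      rw [div_lt_iff₀ hApos] at h1
      linarith
    linarith [key d hd1]
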